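/- arXiv:0903.5129 — 3 statements merged into one kernel-verified Lean document; each statement's English description precedes it below -/
import Mathlib

section
/- The map sending σ ∈ S_n to the transpose of the (n−1)×(n−1) matrix obtained by deleting the first row and first column of T P(σ) Tᵗ is a group homomorphism from S_n into the orthogonal group of (n−1)×(n−1) real orthogonal matrices. -/
open Matrix

/-- The n×n matrix `U` from the paper: first row all ones; row `m` (1-based, m≥2)
has entries −1 in columns 1,…,n−m+1, entry n−m+1 in column n−m+2, and 0 afterwards.
Indices are 0-based here, so row `i` corresponds to `m = i+1`. -/
noncomputable def Umat (n : ℕ) : Matrix (Fin n) (Fin n) ℝ :=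
  Matrix.of fun i j =>
    if i.val = 0 then 1
    else if j.val < n - i.val then -1
    else if j.val = n - i.val then ((n : ℝ) - i.val)
    else 0

/-- The diagonal matrix `A` with `A₁₁ = 1/√n` and `A_kk = 1/√((n−k+1)(n−k+2))` for k ≥ 2
(1-based `k = i+1`). -/
noncomputable def Amat (n : ℕ) : Matrix (Fin n) (Fin n) ℝ :=
  Matrix.diagonal fun i =>
    if i.val = 0 then 1 / Real.sqrt n
    else 1 / Real.sqrt (((n : ℝ) - i.val) * ((n : ℝ) - i.val + 1))

/-- The orthogonal transform `T = A U`. -/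
noncomputable def Tmat (n : ℕ) : Matrix (Fin n) (Fin n) ℝ := Amat n * Umat n

/-- The permutation matrix `P(σ)` with `P(σ)_{i,j} = 1` iff `j = σ(i)`. -/
def Pmat (n : ℕ) (σ : Equiv.Perm (Fin n)) : Matrix (Fin n) (Fin n) ℝ :=
  Matrix.of fun i j => if j = σ i then 1 else 0

noncomputable def uN (n a : ℕ) (k : ℕ) : ℝ :=
  if a = 0 then 1
  else if k < n - a then -1
  else if k = n - a then ((n : ℝ) - a)
  else 0

noncomputable def dvec (n : ℕ) (i : Fin n) : ℝ :=
  if i.val = 0 then 1 / Real.sqrt n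
  else 1 / Real.sqrt (((n : ℝ) - i.val) * ((n : ℝ) - i.val + 1))

lemma uN_zero (n k : ℕ) : uN n 0 k = 1 := by simp [uN]

lemma uN_lt (n a k : ℕ) (ha : a ≠ 0) (h : k < n - a) : uN n a k = -1 := by
  rw [uN, if_neg ha, if_pos h]

lemma uN_eq (n a : ℕ) (ha : a ≠ 0) : uN n a (n - a) = (n:ℝ) - a := by
  rw [uN, if_neg ha, if_neg (lt_irrefl _), if_pos rfl]

lemma uN_gt (n a k : ℕ) (ha : a ≠ 0) (h : n - a < k) : uN n a k = 0 := by
  rw [uN, if_neg ha, if_neg (by omega), if_neg (by omega)]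

lemma split_sum (n m : ℕ) (h : m < n) (f : ℕ → ℝ) (h0 : ∀ k, m < k → f k = 0) :
    ∑ k ∈ Finset.range n, f k = (∑ k ∈ Finset.range m, f k) + f m := by
  have h1 : (∑ k ∈ Finset.Ico 0 (m+1), f k) + ∑ k ∈ Finset.Ico (m+1) n, f k
      = ∑ k ∈ Finset.Ico 0 n, f k :=
    Finset.sum_Ico_consecutive f (Nat.zero_le _) h
  have h2 : ∑ k ∈ Finset.Ico (m+1) n, f k = 0 :=
    Finset.sum_eq_zero fun k hk => h0 k (by have := (Finset.mem_Ico.mp hk).1; omega)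
  rw [Finset.range_eq_Ico, ← h1, h2, add_zero, ← Finset.range_eq_Ico,
    Finset.sum_range_succ]

lemma cast_sub' (n b : ℕ) (hb : b ≤ n) : ((n - b : ℕ) : ℝ) = (n:ℝ) - b := by
  push_cast [Nat.cast_sub hb]; ring

lemma key_le (n a b : ℕ) (hab : a ≤ b) (hb : b < n) :
    ∑ k ∈ Finset.range n, uN n a k * uN n b k =
      if a = b then (if a = 0 then (n:ℝ) else ((n:ℝ)-a) * ((n:ℝ)-a+1)) else 0 := by
  rcases Nat.eq_zero_or_pos b with hb0 | hb0
  · have ha0 : a = 0 := by omega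
    subst ha0; subst hb0
    simp [uN_zero]
  · have hbn : n - b < n := by omega
    have hbne : b ≠ 0 := by omega
    have hcast : ((n - b : ℕ) : ℝ) = (n:ℝ) - b := cast_sub' n b hb.le
    have hz : ∀ k, n - b < k → uN n a k * uN n b k = 0 := fun k hk => by
      rw [uN_gt n b k hbne hk, mul_zero]
    rcases Nat.eq_zero_or_pos a with ha0 | ha0
    · subst ha0
      rw [if_neg (by omega), split_sum n (n-b) hbn _ hz]
      have h1 : ∀ k ∈ Finset.range (n-b), uN n 0 k * uN n b k = -1 := fun k hk => by
        rw [uN_zero, uN_lt n b k hbne (Finset.mem_range.mp hk), one_mul]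
      rw [Finset.sum_congr rfl h1, uN_zero, uN_eq n b hbne, one_mul]
      simp [hcast]
    · have hane : a ≠ 0 := by omega
      rcases eq_or_lt_of_le hab with rfl | hab'
      · rw [if_pos rfl, if_neg hane, split_sum n (n-a) hbn _ hz]
        have h1 : ∀ k ∈ Finset.range (n-a), uN n a k * uN n a k = 1 := fun k hk => by
          rw [uN_lt n a k hane (Finset.mem_range.mp hk)]; ring
        rw [Finset.sum_congr rfl h1, uN_eq n a hane]
        simp only [Finset.sum_const, Finset.card_range, nsmul_eq_mul, mul_one]
        rw [cast_sub' n a (by omega)]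
        ring
      · have hmm : n - b < n - a := by omega
        rw [if_neg (by omega), split_sum n (n-b) hbn _ hz]
        have h1 : ∀ k ∈ Finset.range (n-b), uN n a k * uN n b k = 1 := fun k hk => by
          have hk' := Finset.mem_range.mp hk
          rw [uN_lt n a k hane (by omega), uN_lt n b k hbne hk']; ring
        rw [Finset.sum_congr rfl h1, uN_lt n a (n-b) hane hmm, uN_eq n b hbne]
        simp [hcast]

lemma key (n a b : ℕ) (ha : a < n) (hb : b < n) :
    ∑ k ∈ Finset.range n, uN n a k * uN n b k =
      if a = b then (if a = 0 then (n:ℝ) else ((n:ℝ)-a) * ((n:ℝ)-a+1)) else 0 := by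
  rcases le_total a b with h | h
  · exact key_le n a b h hb
  · have h2 := key_le n b a h ha
    have h3 : ∑ k ∈ Finset.range n, uN n a k * uN n b k
        = ∑ k ∈ Finset.range n, uN n b k * uN n a k :=
      Finset.sum_congr rfl fun k _ => mul_comm _ _
    rw [h3, h2]
    rcases eq_or_ne a b with rfl | hne
    · simp
    · rw [if_neg hne, if_neg (Ne.symm hne)]

lemma Umat_apply (n : ℕ) (i j : Fin n) : Umat n i j = uN n i.val j.val := rfl

lemma T_apply (n : ℕ) (i k : Fin n) : Tmat n i k = dvec n i * uN n i.val k.val := by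
  rw [Tmat, Amat, Matrix.diagonal_mul, ← Umat_apply]
  rfl


lemma TTt (n : ℕ) : Tmat n * (Tmat n)ᵀ = 1 := by
  ext i j
  rw [Matrix.mul_apply]
  have h : ∀ k : Fin n, Tmat n i k * (Tmat n)ᵀ k j
      = (dvec n i * dvec n j) * (uN n i.val k.val * uN n j.val k.val) := fun k => by
    rw [transpose_apply, T_apply, T_apply]; ring
  rw [Finset.sum_congr rfl (fun k _ => h k), ← Finset.mul_sum,
    Fin.sum_univ_eq_sum_range (fun kv => uN n i.val kv * uN n j.val kv),
    key n i.val j.val i.isLt j.isLt]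
  rcases eq_or_ne i j with rfl | hne
  · rw [if_pos rfl, Matrix.one_apply_eq]
    rcases Nat.eq_zero_or_pos i.val with h0 | h0
    · rw [if_pos h0]; simp only [dvec, h0, if_true, eq_self_iff_true]
      have hn0 : (0:ℝ) < n := by
        have : 0 < n := Nat.lt_of_le_of_lt (Nat.zero_le _) i.isLt
        exact_mod_cast this
      have hs : Real.sqrt n ≠ 0 := ne_of_gt (Real.sqrt_pos.mpr hn0)
      rw [div_mul_div_comm, one_mul, Real.mul_self_sqrt hn0.le]
      field_simp
    · rw [if_neg (by omega)]; simp only [dvec, if_neg (by omega : ¬ i.val = 0)]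
      have h1 : (0:ℝ) < (n:ℝ) - i.val := by
        have := i.isLt
        have : (i.val : ℝ) < n := by exact_mod_cast this
        linarith
      have hc : (0:ℝ) < ((n:ℝ) - i.val) * ((n:ℝ) - i.val + 1) :=
        mul_pos h1 (by linarith)
      have hs : Real.sqrt (((n:ℝ) - i.val) * ((n:ℝ) - i.val + 1)) ≠ 0 :=
        ne_of_gt (Real.sqrt_pos.mpr hc)
      rw [div_mul_div_comm, one_mul, Real.mul_self_sqrt hc.le]
      field_simp
  · rw [if_neg (fun h => hne (Fin.ext h)), Matrix.one_apply_ne hne, mul_zero]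

lemma P_one (n : ℕ) : Pmat n 1 = 1 := by
  ext i j
  simp [Pmat, Matrix.one_apply, eq_comm]

lemma P_mul (n : ℕ) (σ δ : Equiv.Perm (Fin n)) :
    Pmat n σ * Pmat n δ = Pmat n (δ * σ) := by
  ext i j
  rw [Matrix.mul_apply]
  simp only [Pmat, Matrix.of_apply]
  rw [Finset.sum_eq_single (σ i)]
  · simp [Equiv.Perm.mul_apply]; congr 1
  · intro k _ hk; rw [if_neg hk, zero_mul]
  · intro h; exact absurd (Finset.mem_univ _) h

lemma P_transpose (n : ℕ) (σ : Equiv.Perm (Fin n)) : (Pmat n σ)ᵀ = Pmat n σ⁻¹ := by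
  ext i j
  simp only [transpose_apply, Pmat, Matrix.of_apply]
  by_cases h : i = σ j
  · rw [if_pos h, if_pos (by rw [h]; simp)]
  · rw [if_neg h, if_neg (fun hc => h (by rw [hc]; simp))]

def emb (n : ℕ) (i : Fin (n-1)) : Fin n := ⟨i.val + 1, by have := i.isLt; omega⟩

lemma sub_one' (n : ℕ) :
    (1 : Matrix (Fin n) (Fin n) ℝ).submatrix (emb n) (emb n) = 1 := by
  ext i j
  simp [Matrix.submatrix_apply, Matrix.one_apply, emb, Fin.ext_iff]

lemma subm_mul {n : ℕ} (hn : 0 < n) (M N : Matrix (Fin n) (Fin n) ℝ)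
    (h : ∀ j : Fin n, 0 < j.val → N ⟨0, hn⟩ j = 0) :
    (M * N).submatrix (emb n) (emb n)
      = M.submatrix (emb n) (emb n) * N.submatrix (emb n) (emb n) := by
  obtain ⟨m, rfl⟩ : ∃ m, n = m + 1 := ⟨n - 1, by omega⟩
  ext i j
  rw [Matrix.submatrix_apply, Matrix.mul_apply, Matrix.mul_apply,
    Fin.sum_univ_succ]
  have h0 : N 0 (emb (m+1) j) = 0 := h _ (by simp [emb])
  have h00 : (0 : Fin (m+1)) = ⟨0, hn⟩ := rfl
  rw [← h00] at *
  rw [h0, mul_zero, zero_add]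
  refine Finset.sum_congr rfl fun k _ => ?_
  have hsucc : Fin.succ k = emb (m+1) k := by
    apply Fin.ext; simp [emb]
  rw [hsucc, Matrix.submatrix_apply, Matrix.submatrix_apply]

noncomputable def Mm (n : ℕ) (σ : Equiv.Perm (Fin n)) : Matrix (Fin n) (Fin n) ℝ :=
  Tmat n * Pmat n σ * (Tmat n)ᵀ

lemma TP_apply (n : ℕ) (σ : Equiv.Perm (Fin n)) (i l : Fin n) :
    (Tmat n * Pmat n σ) i l = Tmat n i (σ⁻¹ l) := by
  rw [Matrix.mul_apply]
  rw [Finset.sum_eq_single (σ⁻¹ l)]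
  · simp [Pmat]
  · intro k _ hk
    simp only [Pmat, Matrix.of_apply]
    rw [if_neg (fun hc => hk (by rw [hc]; simp)), mul_zero]
  · intro h; exact absurd (Finset.mem_univ _) h

lemma M_border (n : ℕ) (σ : Equiv.Perm (Fin n)) (i j : Fin n)
    (h : i.val = 0 ∨ j.val = 0) :
    Mm n σ i j = (1 : Matrix (Fin n) (Fin n) ℝ) i j := by
  rw [Mm, Matrix.mul_apply]
  have hsummand : ∀ l, (Tmat n * Pmat n σ) i l * (Tmat n)ᵀ l j
      = Tmat n i (σ⁻¹ l) * Tmat n j l := fun l => by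
    rw [TP_apply, transpose_apply]
  rcases h with h | h
  · have hconst : ∀ k : Fin n, Tmat n i k = dvec n i := fun k => by
      rw [T_apply, uN, if_pos h, mul_one]
    calc ∑ l : Fin n, (Tmat n * Pmat n σ) i l * (Tmat n)ᵀ l j
        = ∑ l : Fin n, Tmat n i l * (Tmat n)ᵀ l j := by
          refine Finset.sum_congr rfl fun l _ => ?_
          rw [hsummand, transpose_apply, hconst, hconst]
      _ = (Tmat n * (Tmat n)ᵀ) i j := (Matrix.mul_apply).symm
      _ = (1 : Matrix (Fin n) (Fin n) ℝ) i j := by rw [TTt]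
  · have hconst : ∀ k : Fin n, Tmat n j k = dvec n j := fun k => by
      rw [T_apply, uN, if_pos h, mul_one]
    calc ∑ l : Fin n, (Tmat n * Pmat n σ) i l * (Tmat n)ᵀ l j
        = ∑ l : Fin n, Tmat n i (σ⁻¹ l) * dvec n j := by
          refine Finset.sum_congr rfl fun l _ => ?_
          rw [hsummand, hconst]
      _ = ∑ l : Fin n, Tmat n i l * dvec n j :=
          Equiv.sum_comp (σ⁻¹ : Equiv.Perm (Fin n)) (fun l => Tmat n i l * dvec n j)
      _ = ∑ l : Fin n, Tmat n i l * (Tmat n)ᵀ l j := by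
          refine Finset.sum_congr rfl fun l _ => ?_
          rw [transpose_apply, hconst]
      _ = (Tmat n * (Tmat n)ᵀ) i j := (Matrix.mul_apply).symm
      _ = (1 : Matrix (Fin n) (Fin n) ℝ) i j := by rw [TTt]

lemma M_mul (n : ℕ) (σ δ : Equiv.Perm (Fin n)) :
    Mm n σ * Mm n δ = Mm n (δ * σ) := by
  have hTtT : (Tmat n)ᵀ * Tmat n = 1 := mul_eq_one_comm.mp (TTt n)
  have h1 : Mm n σ * Mm n δ
      = Tmat n * (Pmat n σ * (((Tmat n)ᵀ * Tmat n) * (Pmat n δ * (Tmat n)ᵀ))) := by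
    simp only [Mm, Matrix.mul_assoc]
  rw [h1, hTtT, one_mul, Mm, ← P_mul]
  simp only [Matrix.mul_assoc]

lemma M_one (n : ℕ) : Mm n 1 = 1 := by
  rw [Mm, P_one, Matrix.mul_one, TTt]

lemma M_transpose (n : ℕ) (σ : Equiv.Perm (Fin n)) : (Mm n σ)ᵀ = Mm n σ⁻¹ := by
  rw [Mm, Mm, Matrix.transpose_mul, Matrix.transpose_mul, Matrix.transpose_transpose,
    P_transpose, Matrix.mul_assoc]


/-- The map sending σ to the transpose of the (n−1)×(n−1) matrix obtained
from T P(σ) Tᵗ by deleting the first row and column is a group homomorphism of Sₙ into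
the orthogonal group of (n−1)×(n−1) real orthogonal matrices. -/
theorem stmt_1 (n : ℕ) (hn : 2 ≤ n) :
    let D : Equiv.Perm (Fin n) → Matrix (Fin (n - 1)) (Fin (n - 1)) ℝ := fun σ =>
      ((Tmat n * Pmat n σ * (Tmat n)ᵀ).submatrix
        (fun i : Fin (n - 1) => (⟨i.val + 1, by have := i.isLt; omega⟩ : Fin n))
        (fun j : Fin (n - 1) => (⟨j.val + 1, by have := j.isLt; omega⟩ : Fin n)))ᵀ
    (∀ σ, D σ ∈ Matrix.orthogonalGroup (Fin (n - 1)) ℝ) ∧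
    D 1 = 1 ∧
    (∀ σ δ, D (σ * δ) = D σ * D δ) := by
  intro D
  have hn0 : 0 < n := by omega
  have hD : ∀ σ, D σ = ((Mm n σ).submatrix (emb n) (emb n))ᵀ := fun σ => rfl
  have hborder : ∀ (σ : Equiv.Perm (Fin n)) (j : Fin n), 0 < j.val →
      Mm n σ ⟨0, hn0⟩ j = 0 := by
    intro σ j hj
    rw [M_border n σ _ j (Or.inl rfl)]
    exact Matrix.one_apply_ne (fun hc => by
      have : (0 : ℕ) = j.val := congrArg Fin.val hc
      omega)
  have hsub : ∀ σ δ : Equiv.Perm (Fin n),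
      (Mm n σ * Mm n δ).submatrix (emb n) (emb n)
        = (Mm n σ).submatrix (emb n) (emb n) * (Mm n δ).submatrix (emb n) (emb n) :=
    fun σ δ => subm_mul hn0 _ _ (hborder δ)
  refine ⟨?_, ?_, ?_⟩
  · intro σ
    rw [Matrix.mem_orthogonalGroup_iff]
    have hstar : star (D σ) = (D σ)ᵀ := by
      ext i j
      simp [Matrix.star_apply]
    rw [hD, Matrix.transpose_transpose, Matrix.transpose_submatrix,
      M_transpose, ← hsub, M_mul]
    simp [M_one, sub_one']
  · rw [hD, M_one, sub_one']
    exact Matrix.transpose_one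
  · intro σ δ
    rw [hD, hD, hD, ← Matrix.transpose_mul, ← hsub, M_mul]
end

section
/- Let τ_1 = (1,2) be the adjacent transposition swapping 1 and 2. Then T P(τ_1) Tᵗ equals the n×n identity matrix in every entry except the (n,n) entry, which equals −1; that is, T P(τ_1) Tᵗ = diag(1, 1, …, 1, −1). -/
open Matrix

/- ### Auxiliary lemmas -/

/-- The basic row function of `U` (for rows `i ≥ 1`, with `m = n - i`). -/
def rowf (m j : ℕ) : ℝ := if j < m then -1 else if j = m then (m : ℝ) else 0

lemma sum_tmpl (n m : ℕ) (hm : m < n) (v c : ℝ) :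
    ∑ j ∈ Finset.range n, (if j < m then v else if j = m then c else 0) = m * v + c := by
  have h : ∀ j ∈ Finset.range n, (if j < m then v else if j = m then c else 0)
      = (if j < m then v else 0) + (if j = m then c else 0) := by
    intro j _
    split_ifs with h1 h2 <;> first | omega | ring1
  rw [Finset.sum_congr rfl h, Finset.sum_add_distrib]
  rw [Finset.sum_ite_eq' (Finset.range n) m (fun _ => c)]
  rw [← Finset.sum_filter]
  have : (Finset.range n).filter (· < m) = Finset.range m := by
    ext x; simp; omega
  rw [this]
  simp [hm, mul_comm]

lemma L1 (n m : ℕ) (hm : m < n) :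
    ∑ j ∈ Finset.range n, rowf m j = 0 := by
  have := sum_tmpl n m hm (-1) (m : ℝ)
  simp only [rowf]
  rw [this]; ring

lemma L2 (n a b : ℕ) (hba : b < a) (ha : a < n) :
    ∑ j ∈ Finset.range n, rowf a j * rowf b j = 0 := by
  have h : ∀ j ∈ Finset.range n, rowf a j * rowf b j
      = (if j < b then (1:ℝ) else if j = b then -(b:ℝ) else 0) := by
    intro j _
    simp only [rowf]
    split_ifs <;> first | omega | ring1
  rw [Finset.sum_congr rfl h, sum_tmpl n b (by omega) 1 (-(b:ℝ))]
  ring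

lemma L3 (n a : ℕ) (ha : a < n) :
    ∑ j ∈ Finset.range n, rowf a j * rowf a j = (a : ℝ) * ((a : ℝ) + 1) := by
  have h : ∀ j ∈ Finset.range n, rowf a j * rowf a j
      = (if j < a then (1:ℝ) else if j = a then (a:ℝ)*(a:ℝ) else 0) := by
    intro j _
    simp only [rowf]
    split_ifs <;> first | omega | ring1
  rw [Finset.sum_congr rfl h, sum_tmpl n a ha 1 ((a:ℝ)*(a:ℝ))]
  ring

lemma U_apply_ne (n : ℕ) (i j : Fin n) (h : i.val ≠ 0) :
    Umat n i j = rowf (n - i.val) j.val := by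
  simp only [Umat, Matrix.of_apply, rowf, h, if_false]
  have : ((n : ℝ) - i.val) = ((n - i.val : ℕ) : ℝ) := by
    push_cast [Nat.cast_sub i.isLt.le]; ring
  rw [this]

lemma U_apply_zero (n : ℕ) (i j : Fin n) (h : i.val = 0) : Umat n i j = 1 := by
  simp [Umat, h]

lemma U_mul_Ut (n : ℕ) :
    Umat n * (Umat n)ᵀ = Matrix.diagonal (fun i : Fin n =>
      if i.val = 0 then (n : ℝ) else ((n : ℝ) - i.val) * ((n : ℝ) - i.val + 1)) := by
  ext i k
  rw [Matrix.mul_apply]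
  simp only [Matrix.transpose_apply, Matrix.diagonal]
  by_cases hi : i.val = 0
  · by_cases hk : k.val = 0
    · have hik : i = k := Fin.ext (by omega)
      simp [hik, U_apply_zero n k _ hk, Finset.card_univ, hi, hk]
    · have hik : i ≠ k := fun h => hk (h ▸ hi)
      have : ∀ j, Umat n i j * Umat n k j = rowf (n - k.val) j.val := by
        intro j; rw [U_apply_zero n i j hi, U_apply_ne n k j hk, one_mul]
      simp only [this]
      rw [Fin.sum_univ_eq_sum_range (fun j => rowf (n - k.val) j) n]
      rw [L1 n (n - k.val) (by have := k.isLt; omega)]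
      simp [hik, hi, hk]
  · by_cases hk : k.val = 0
    · have hik : i ≠ k := fun h => hi (h ▸ hk)
      have : ∀ j, Umat n i j * Umat n k j = rowf (n - i.val) j.val := by
        intro j; rw [U_apply_zero n k j hk, U_apply_ne n i j hi, mul_one]
      simp only [this]
      rw [Fin.sum_univ_eq_sum_range (fun j => rowf (n - i.val) j) n]
      rw [L1 n (n - i.val) (by have := i.isLt; omega)]
      simp [hik]
    · have key : ∀ j, Umat n i j * Umat n k j
          = rowf (n - i.val) j.val * rowf (n - k.val) j.val := by
        intro j; rw [U_apply_ne n i j hi, U_apply_ne n k j hk]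
      simp only [key]
      rw [Fin.sum_univ_eq_sum_range (fun j => rowf (n - i.val) j * rowf (n - k.val) j) n]
      rcases lt_trichotomy i.val k.val with h | h | h
      · have hik : i ≠ k := fun he => by simp [he] at h
        rw [L2 n (n - i.val) (n - k.val) (by have := k.isLt; omega) (by have := i.isLt; omega)]
        simp [hik]
      · have hik : i = k := Fin.ext h
        rw [h, L3 n (n - k.val) (by have := k.isLt; omega)]
        have hc : ((n - k.val : ℕ) : ℝ) = (n : ℝ) - k.val := by
          push_cast [Nat.cast_sub k.isLt.le]; ring
        simp [hik, hk, hc]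
      · have hik : i ≠ k := fun he => by simp [he] at h
        have hc : ∀ j ∈ Finset.range n, rowf (n - i.val) j * rowf (n - k.val) j
            = rowf (n - k.val) j * rowf (n - i.val) j := fun j _ => mul_comm _ _
        rw [Finset.sum_congr rfl hc,
          L2 n (n - k.val) (n - i.val) (by have := i.isLt; omega) (by have := k.isLt; omega)]
        simp [hik]

lemma cast_last (n : ℕ) (hn : 2 ≤ n) (i : Fin n) (h : i.val = n - 1) :
    (n : ℝ) - i.val = 1 := by
  have : (i.val : ℝ) = (n : ℝ) - 1 := by
    rw [h]; push_cast [Nat.cast_sub (by omega : 1 ≤ n)]; ring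
  linarith

lemma U_swap (n : ℕ) (hn : 2 ≤ n) (i j : Fin n) :
    Umat n i (Equiv.swap ⟨0, Nat.lt_of_lt_of_le (by norm_num) hn⟩ ⟨1, Nat.lt_of_lt_of_le (by norm_num) hn⟩ j) =
      (if i.val = n - 1 then (-1 : ℝ) else 1) * Umat n i j := by
  set a : Fin n := ⟨0, by omega⟩
  set b : Fin n := ⟨1, by omega⟩
  by_cases hj0 : j = a
  · rw [hj0, Equiv.swap_apply_left]
    simp only [Umat, Matrix.of_apply]
    have hc := cast_last n hn i
    have ha : a.val = 0 := rfl
    have hb : b.val = 1 := rfl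
    split_ifs <;> first | omega | ring1 | linarith [hc (by omega)]
  · by_cases hj1 : j = b
    · rw [hj1, Equiv.swap_apply_right]
      simp only [Umat, Matrix.of_apply]
      have hc := cast_last n hn i
      have ha : a.val = 0 := rfl
      have hb : b.val = 1 := rfl
      split_ifs <;> first | omega | ring1 | linarith [hc (by omega)]
    · rw [Equiv.swap_apply_of_ne_of_ne hj0 hj1]
      have hj : 2 ≤ j.val := by
        rcases Nat.lt_or_ge j.val 2 with h | h
        · interval_cases hv : j.val
          · exact absurd (Fin.ext hv) hj0
          · exact absurd (Fin.ext hv) hj1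
        · exact h
      simp only [Umat, Matrix.of_apply]
      split_ifs <;> first | omega | ring1

lemma U_mul_P (n : ℕ) (hn : 2 ≤ n) :
    Umat n * Pmat n (Equiv.swap ⟨0, Nat.lt_of_lt_of_le (by norm_num) hn⟩ ⟨1, Nat.lt_of_lt_of_le (by norm_num) hn⟩) =
      Matrix.diagonal (fun i : Fin n => if i.val = n - 1 then (-1 : ℝ) else 1) * Umat n := by
  set σ : Equiv.Perm (Fin n) := Equiv.swap ⟨0, by omega⟩ ⟨1, by omega⟩ with hσ
  ext i j
  rw [Matrix.mul_apply, Matrix.diagonal_mul]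
  have h1 : ∀ k : Fin n, Umat n i k * Pmat n σ k j
      = if k = σ j then Umat n i k else 0 := by
    intro k
    have : (j = σ k) ↔ (k = σ j) := by
      constructor
      · intro h; rw [h, hσ, Equiv.swap_apply_self]
      · intro h; rw [h, hσ, Equiv.swap_apply_self]
    simp only [Pmat, Matrix.of_apply, this]
    split_ifs <;> ring
  rw [Finset.sum_congr rfl (fun k _ => h1 k), Finset.sum_ite_eq' Finset.univ (σ j)]
  simp only [Finset.mem_univ, if_true]
  exact U_swap n hn i j

lemma sqrt_cancel (x : ℝ) (hx : 0 < x) :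
    1 / Real.sqrt x * x * (1 / Real.sqrt x) = 1 := by
  have h : Real.sqrt x * Real.sqrt x = x := Real.mul_self_sqrt hx.le
  have hne : Real.sqrt x ≠ 0 := (Real.sqrt_pos.mpr hx).ne'
  field_simp
  rw [sq, h]

/-- For the adjacent transposition τ₁ = (1,2),
T P(τ₁) Tᵗ = diag(1, 1, …, 1, −1). -/
theorem stmt_2 (n : ℕ) (hn : 2 ≤ n) :
    Tmat n * Pmat n (Equiv.swap ⟨0, by omega⟩ ⟨1, by omega⟩) * (Tmat n)ᵀ =
      Matrix.diagonal (fun i : Fin n => if i.val = n - 1 then (-1 : ℝ) else 1) := by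
  have hAt : (Amat n)ᵀ = Amat n := Matrix.diagonal_transpose _
  rw [Tmat, Matrix.transpose_mul, hAt]
  calc Amat n * Umat n * Pmat n (Equiv.swap ⟨0, by omega⟩ ⟨1, by omega⟩)
        * ((Umat n)ᵀ * Amat n)
      = Amat n * (Umat n * Pmat n (Equiv.swap ⟨0, by omega⟩ ⟨1, by omega⟩))
        * ((Umat n)ᵀ * Amat n) := by rw [Matrix.mul_assoc (Amat n)]
    _ = Amat n * (Matrix.diagonal (fun i : Fin n => if i.val = n - 1 then (-1 : ℝ) else 1)
          * Umat n) * ((Umat n)ᵀ * Amat n) := by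
        rw [U_mul_P n hn]
    _ = (Amat n * Matrix.diagonal (fun i : Fin n => if i.val = n - 1 then (-1 : ℝ) else 1))
          * (Umat n * (Umat n)ᵀ) * Amat n := by
        simp only [Matrix.mul_assoc]
    _ = (Amat n * Matrix.diagonal (fun i : Fin n => if i.val = n - 1 then (-1 : ℝ) else 1))
          * Matrix.diagonal (fun i : Fin n =>
            if i.val = 0 then (n : ℝ) else ((n : ℝ) - i.val) * ((n : ℝ) - i.val + 1))
          * Amat n := by
        rw [U_mul_Ut n]
    _ = Matrix.diagonal (fun i : Fin n => if i.val = n - 1 then (-1 : ℝ) else 1) := by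
        rw [Amat, Matrix.diagonal_mul_diagonal, Matrix.diagonal_mul_diagonal,
          Matrix.diagonal_mul_diagonal]
        refine congrArg Matrix.diagonal (funext fun i => ?_)
        beta_reduce
        have hcancel : (if i.val = 0 then 1 / Real.sqrt n
            else 1 / Real.sqrt (((n : ℝ) - i.val) * ((n : ℝ) - i.val + 1))) *
            (if i.val = 0 then (n : ℝ) else ((n : ℝ) - i.val) * ((n : ℝ) - i.val + 1)) *
            (if i.val = 0 then 1 / Real.sqrt n
            else 1 / Real.sqrt (((n : ℝ) - i.val) * ((n : ℝ) - i.val + 1))) = 1 := by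
          by_cases hi : i.val = 0
          · simp only [hi, if_true]
            exact sqrt_cancel n (by positivity)
          · simp only [hi, if_false]
            have h1 : (i.val : ℝ) < n := by exact_mod_cast i.isLt
            have h2 : (0:ℝ) < ((n : ℝ) - i.val) * ((n : ℝ) - i.val + 1) := by nlinarith
            exact sqrt_cancel _ h2
        set A := (if i.val = 0 then 1 / Real.sqrt n
            else 1 / Real.sqrt (((n : ℝ) - i.val) * ((n : ℝ) - i.val + 1)))
        set E := (if i.val = n - 1 then (-1:ℝ) else 1)
        set D := (if i.val = 0 then (n : ℝ) else ((n : ℝ) - i.val) * ((n : ℝ) - i.val + 1))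
        calc A * E * D * A = E * (A * D * A) := by ring
          _ = E := by rw [hcancel, mul_one]
end

section
/- The sum, over all permutations σ ∈ S_n with σ(n) = n, of the matrices T P(σ) Tᵗ equals (n−1)! times the n×n matrix whose (1,1) and (2,2) entries are 1 and all other entries are 0. -/
open Matrix

/-! ### Counting permutations -/

section counting
variable {α : Type*} [Fintype α] [DecidableEq α]

noncomputable def permFixEquiv (a : α) :
    Equiv.Perm {x : α // x ≠ a} ≃ {f : Equiv.Perm α // f a = a} :=
  (Equiv.Perm.subtypeEquivSubtypePerm (fun x => x ≠ a)).trans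
    (Equiv.subtypeEquivRight fun f =>
      ⟨fun h => h a (by simp), fun h x hx => by
        push_neg at hx; subst hx; exact h⟩)

lemma permFixEquiv_apply_coe (a : α) (τ : Equiv.Perm {x : α // x ≠ a}) (x : α) (hx : x ≠ a) :
    ((permFixEquiv a τ : Equiv.Perm α)) x = τ ⟨x, hx⟩ :=
  Equiv.Perm.subtypeEquivSubtypePerm_apply_of_mem τ hx

lemma card_ne (a : α) : Fintype.card {x : α // x ≠ a} = Fintype.card α - 1 := by
  simp [Fintype.card_subtype_compl]

lemma card_perm_eq (a b : α) :
    Fintype.card {σ : Equiv.Perm α // σ a = b} = (Fintype.card α - 1).factorial := by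
  have e1 : {σ : Equiv.Perm α // σ a = b} ≃ {σ : Equiv.Perm α // σ a = a} :=
    Equiv.subtypeEquiv (Equiv.mulLeft (Equiv.swap a b)) (fun σ => by
      constructor
      · intro h
        show (Equiv.mulLeft (Equiv.swap a b) σ) a = a
        show Equiv.swap a b (σ a) = a
        rw [h, Equiv.swap_apply_right]
      · intro h
        replace h : Equiv.swap a b (σ a) = a := h
        have : Equiv.swap a b (σ a) = Equiv.swap a b b := by
          rw [Equiv.swap_apply_right]; exact h
        exact (Equiv.swap a b).injective this)
  rw [Fintype.card_congr (e1.trans (permFixEquiv a).symm), Fintype.card_perm, card_ne]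

lemma card_perm_eq_two (l a b : α) (ha : a ≠ l) (hb : b ≠ l) :
    Fintype.card {σ : Equiv.Perm α // σ l = l ∧ σ a = b} =
      (Fintype.card α - 2).factorial := by
  have e1 : {σ : Equiv.Perm α // σ l = l ∧ σ a = b} ≃
      {p : {f : Equiv.Perm α // f l = l} // (p : Equiv.Perm α) a = b} :=
    (Equiv.subtypeSubtypeEquivSubtypeInter (fun f : Equiv.Perm α => f l = l)
      (fun f => f a = b)).symm
  have e2 : {p : {f : Equiv.Perm α // f l = l} // (p : Equiv.Perm α) a = b} ≃
      {τ : Equiv.Perm {x : α // x ≠ l} // τ ⟨a, ha⟩ = ⟨b, hb⟩} :=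
    ((permFixEquiv l).symm.subtypeEquiv (fun p => by
      rcases (permFixEquiv l).surjective p with ⟨τ, rfl⟩
      rw [Equiv.symm_apply_apply]
      rw [permFixEquiv_apply_coe l τ a ha]
      exact ⟨fun h => Subtype.ext h, fun h => congrArg Subtype.val h⟩))
  rw [Fintype.card_congr (e1.trans e2), card_perm_eq, card_ne]
  try rfl

end counting

/-! ### Structure of T -/

noncomputable def Dfun (n : ℕ) : Fin n → ℝ := fun p =>
  if p.val = 0 then 1 / Real.sqrt n
  else 1 / Real.sqrt (((n : ℝ) - p.val) * ((n : ℝ) - p.val + 1))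

noncomputable def ULf (n : ℕ) : Fin n → ℝ := fun p =>
  if p.val = 0 then 1 else if p.val = 1 then (n : ℝ) - 1 else 0

noncomputable def Rf (n : ℕ) : Fin n → ℝ := fun p =>
  if p.val = 0 then (n : ℝ) else 0

lemma Tmat_apply (n : ℕ) (p q : Fin n) : Tmat n p q = Dfun n p * Umat n p q := by
  rw [Tmat, Amat, Matrix.diagonal_mul]; rfl

lemma Ulast (n : ℕ) (hn : 3 ≤ n) (i : Fin n) :
    Umat n i ⟨n - 1, (by omega : n - 1 < n + 0)⟩ = ULf n i := by
  have hi := i.isLt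
  simp only [Umat, Matrix.of_apply, ULf]
  by_cases h0 : i.val = 0
  · simp [h0]
  · rw [if_neg h0, if_neg (by omega), if_neg h0]
    by_cases h1 : i.val = 1
    · rw [if_pos (by omega), if_pos h1, h1]
      norm_num
    · rw [if_neg (by omega), if_neg h1]

lemma Urowsum (n : ℕ) (hn : 3 ≤ n) (i : Fin n) :
    ∑ j, Umat n i j = Rf n i := by
  have hi := i.isLt
  simp only [Rf]
  by_cases h0 : i.val = 0
  · simp [Umat, h0]
  · rw [if_neg h0]
    set k : ℕ := n - i.val with hk
    have hkn : k < n := by omega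
    have hcast : (k : ℝ) = (n : ℝ) - i.val := by
      rw [hk]; push_cast [Nat.cast_sub (le_of_lt hi)]; ring
    have hterm : ∀ j : Fin n, Umat n i j =
        (if j.val ∈ Finset.range k then (-1 : ℝ) else 0) +
        (if j.val = k then ((n : ℝ) - i.val) else 0) := by
      intro j
      simp only [Umat, Matrix.of_apply, if_neg h0, Finset.mem_range]
      by_cases hlt : j.val < k
      · rw [if_pos hlt, if_pos hlt, if_neg (by omega)]; ring
      · rw [if_neg hlt, if_neg hlt]
        by_cases heq : j.val = k
        · simp [heq, ← hk]
        · simp [heq, ← hk]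
    rw [Finset.sum_congr rfl (fun j _ => hterm j), Finset.sum_add_distrib]
    have h1 : ∑ j : Fin n, (if j.val ∈ Finset.range k then (-1 : ℝ) else 0) = -(k : ℝ) := by
      rw [Fin.sum_univ_eq_sum_range (fun j => if j ∈ Finset.range k then (-1 : ℝ) else 0) n]
      rw [Finset.sum_ite_mem]
      have : Finset.range n ∩ Finset.range k = Finset.range k := by
        ext x; simp [Finset.mem_range]; omega
      rw [this, Finset.sum_const, Finset.card_range]
      simp
    have h2 : ∑ j : Fin n, (if j.val = k then ((n : ℝ) - i.val) else 0) = (n : ℝ) - i.val := by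
      rw [Fin.sum_univ_eq_sum_range (fun j => if j = k then ((n : ℝ) - i.val) else 0) n]
      rw [Finset.sum_ite_eq' (Finset.range n) k (fun _ => ((n : ℝ) - i.val))]
      rw [if_pos (Finset.mem_range.2 hkn)]
    rw [h1, h2, hcast]; ring

/-! ### The summed permutation matrix -/

noncomputable def Smat (n : ℕ) (hpos : 0 < n) : Matrix (Fin n) (Fin n) ℝ :=
  Matrix.of fun a b =>
    if a = (⟨n - 1, by omega⟩ : Fin n) then
      (if b = (⟨n - 1, by omega⟩ : Fin n) then ((n - 1).factorial : ℝ) else 0)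
    else (if b = (⟨n - 1, by omega⟩ : Fin n) then 0 else ((n - 2).factorial : ℝ))

lemma sumP (n : ℕ) (hn : 3 ≤ n) :
    ∑ σ ∈ Finset.univ.filter
        (fun σ : Equiv.Perm (Fin n) => σ ⟨n - 1, (by omega : n - 1 < n + 0)⟩ = ⟨n - 1, (by omega : n - 1 < n + 0)⟩),
      Pmat n σ = Smat n (by omega) := by
  set l : Fin n := ⟨n - 1, by omega⟩ with hldef
  ext a b
  rw [Matrix.sum_apply]
  have hterm : ∀ σ : Equiv.Perm (Fin n), Pmat n σ a b = if σ a = b then (1 : ℝ) else 0 := by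
    intro σ; simp [Pmat, eq_comm]
  rw [Finset.sum_congr rfl (fun σ _ => hterm σ), Finset.sum_boole, Finset.filter_filter]
  rw [show (Finset.univ.filter fun σ : Equiv.Perm (Fin n) => σ l = l ∧ σ a = b).card
        = Fintype.card {σ : Equiv.Perm (Fin n) // σ l = l ∧ σ a = b} from
      (Fintype.card_subtype _).symm]
  simp only [Smat, Matrix.of_apply]
  by_cases ha : a = l <;> by_cases hb : b = l
  · rw [if_pos ha, if_pos hb, ha, hb]
    have e : {σ : Equiv.Perm (Fin n) // σ l = l ∧ σ l = l} ≃
        {σ : Equiv.Perm (Fin n) // σ l = l} :=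
      Equiv.subtypeEquivRight (fun σ => ⟨fun h => h.1, fun h => ⟨h, h⟩⟩)
    rw [Fintype.card_congr e, card_perm_eq l l, Fintype.card_fin]
  · rw [if_pos ha, if_neg hb, ha]
    have : IsEmpty {σ : Equiv.Perm (Fin n) // σ l = l ∧ σ l = b} :=
      ⟨fun ⟨σ, h1, h2⟩ => hb (by rw [← h2, h1])⟩
    rw [Fintype.card_eq_zero]
    simp
  · rw [if_neg ha, if_pos hb, hb]
    have : IsEmpty {σ : Equiv.Perm (Fin n) // σ l = l ∧ σ a = l} :=
      ⟨fun ⟨σ, h1, h2⟩ => ha (σ.injective (h2.trans h1.symm))⟩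
    rw [Fintype.card_eq_zero]
    simp
  · rw [if_neg ha, if_neg hb]
    rw [card_perm_eq_two l a b ha hb, Fintype.card_fin]

lemma TST (n : ℕ) (hn : 3 ≤ n) :
    Tmat n * Smat n (by omega) * (Tmat n)ᵀ =
    ((n - 1).factorial : ℝ) •
      Matrix.of (fun i j : Fin n => if i = j ∧ i.val ≤ 1 then (1 : ℝ) else 0) := by
  set l : Fin n := ⟨n - 1, by omega⟩ with hldef
  set F1 : ℝ := ((n - 1).factorial : ℝ) with hF1
  set F2 : ℝ := ((n - 2).factorial : ℝ) with hF2
  have hpos : 0 < n := by omega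
  have hF : F1 = ((n : ℝ) - 1) * F2 := by
    rw [hF1, hF2]
    have h1 : n - 1 = (n - 2) + 1 := by omega
    rw [h1, Nat.factorial_succ]
    push_cast
    have : ((n - 2 : ℕ) : ℝ) = (n : ℝ) - 2 := by
      push_cast [Nat.cast_sub (by omega : 2 ≤ n)]; ring
    rw [this]; ring
  have inner : ∀ p b : Fin n, ∑ a, Umat n p a * Smat n hpos a b =
      if b = l then F1 * ULf n p else F2 * (Rf n p - ULf n p) := by
    intro p b
    by_cases hb : b = l
    · rw [if_pos hb]
      have hterm : ∀ a : Fin n, Umat n p a * Smat n hpos a b =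
          if a = l then Umat n p a * F1 else 0 := by
        intro a
        by_cases ha : a = l
        · rw [if_pos ha]
          simp only [Smat, Matrix.of_apply, ← hldef, ← hF1, ← hF2, if_pos ha, if_pos hb]
        · rw [if_neg ha]
          simp only [Smat, Matrix.of_apply, ← hldef, ← hF1, ← hF2, if_neg ha, if_pos hb]
          exact mul_zero _
      rw [Finset.sum_congr rfl (fun a _ => hterm a),
        Finset.sum_ite_eq' Finset.univ l (fun a => Umat n p a * F1),
        if_pos (Finset.mem_univ l), Ulast n hn p]
      ring
    · rw [if_neg hb]
      have hterm : ∀ a : Fin n, Umat n p a * Smat n hpos a b =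
          Umat n p a * F2 - (if a = l then Umat n p a * F2 else 0) := by
        intro a
        by_cases ha : a = l
        · rw [if_pos ha]
          simp only [Smat, Matrix.of_apply, ← hldef, ← hF1, ← hF2, if_pos ha, if_neg hb]
          ring
        · rw [if_neg ha]
          simp only [Smat, Matrix.of_apply, ← hldef, ← hF1, ← hF2, if_neg ha, if_neg hb]
          ring
      rw [Finset.sum_congr rfl (fun a _ => hterm a), Finset.sum_sub_distrib,
        ← Finset.sum_mul,
        Finset.sum_ite_eq' Finset.univ l (fun a => Umat n p a * F2),
        if_pos (Finset.mem_univ l), Urowsum n hn p, Ulast n hn p]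
      ring
  ext i j
  have h1 : ∀ b : Fin n, (Tmat n * Smat n hpos) i b =
      Dfun n i * (if b = l then F1 * ULf n i else F2 * (Rf n i - ULf n i)) := by
    intro b
    rw [Matrix.mul_apply]
    rw [Finset.sum_congr rfl (fun a _ => by rw [Tmat_apply, mul_assoc] :
      ∀ a ∈ Finset.univ, Tmat n i a * Smat n hpos a b
        = Dfun n i * (Umat n i a * Smat n hpos a b))]
    rw [← Finset.mul_sum, inner i b]
  have lhs_eq : (Tmat n * Smat n hpos * (Tmat n)ᵀ) i j =
      Dfun n i * (F2 * (Rf n i - ULf n i)) * (Dfun n j * Rf n j)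
      + (Dfun n i * (F1 * ULf n i) - Dfun n i * (F2 * (Rf n i - ULf n i)))
        * (Dfun n j * ULf n j) := by
    rw [Matrix.mul_apply]
    have hterm : ∀ b : Fin n, (Tmat n * Smat n hpos) i b * (Tmat n)ᵀ b j =
        Dfun n i * (F2 * (Rf n i - ULf n i)) * (Dfun n j * Umat n j b)
        + (if b = l then (Dfun n i * (F1 * ULf n i)
            - Dfun n i * (F2 * (Rf n i - ULf n i))) * (Dfun n j * Umat n j b) else 0) := by
      intro b
      rw [Matrix.transpose_apply, h1 b, Tmat_apply]
      by_cases hb : b = l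
      · rw [if_pos hb, if_pos hb]; ring
      · rw [if_neg hb, if_neg hb]; ring
    rw [Finset.sum_congr rfl (fun b _ => hterm b), Finset.sum_add_distrib,
      Finset.sum_ite_eq' Finset.univ l _, if_pos (Finset.mem_univ l), ← Finset.mul_sum]
    congr 1
    · rw [show ∑ b, Dfun n j * Umat n j b = Dfun n j * ∑ b, Umat n j b from
        (Finset.mul_sum _ _ _).symm, Urowsum n hn j]
    · rw [Ulast n hn j]
  rw [show (Tmat n * Smat n (by omega : 0 < n) * (Tmat n)ᵀ) i j
      = (Tmat n * Smat n hpos * (Tmat n)ᵀ) i j from rfl, lhs_eq]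
  simp only [Matrix.smul_apply, Matrix.of_apply, smul_eq_mul]
  have hN3 : (3 : ℝ) ≤ (n : ℝ) := by exact_mod_cast hn
  have hsN : (n : ℝ) * (1 / Real.sqrt n * (1 / Real.sqrt n)) = 1 := by
    rw [div_mul_div_comm, one_mul, Real.mul_self_sqrt (by positivity)]
    field_simp
  have hsM : (((n : ℝ) - 1) * ((n : ℝ) - 1 + 1)) *
      (1 / Real.sqrt (((n : ℝ) - 1) * ((n : ℝ) - 1 + 1))
        * (1 / Real.sqrt (((n : ℝ) - 1) * ((n : ℝ) - 1 + 1)))) = 1 := by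
    have hMpos : (0 : ℝ) < ((n : ℝ) - 1) * ((n : ℝ) - 1 + 1) := by nlinarith
    rw [div_mul_div_comm, one_mul, Real.mul_self_sqrt hMpos.le, mul_one_div,
      div_self (ne_of_gt hMpos)]
  have hD0 : ∀ p : Fin n, p.val = 0 → Dfun n p = 1 / Real.sqrt n := fun p hp => by
    simp [Dfun, hp]
  have hD1 : ∀ p : Fin n, p.val = 1 →
      Dfun n p = 1 / Real.sqrt (((n : ℝ) - 1) * ((n : ℝ) - 1 + 1)) := fun p hp => by
    simp [Dfun, hp]
  have hUL0 : ∀ p : Fin n, p.val = 0 → ULf n p = 1 := fun p hp => by simp [ULf, hp]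
  have hUL1 : ∀ p : Fin n, p.val = 1 → ULf n p = (n : ℝ) - 1 := fun p hp => by
    simp [ULf, hp]
  have hUL2 : ∀ p : Fin n, ¬p.val = 0 → ¬p.val = 1 → ULf n p = 0 := fun p h0 h1 => by
    simp [ULf, h0, h1]
  have hR0 : ∀ p : Fin n, p.val = 0 → Rf n p = (n : ℝ) := fun p hp => by simp [Rf, hp]
  have hR1 : ∀ p : Fin n, ¬p.val = 0 → Rf n p = 0 := fun p hp => by simp [Rf, hp]
  by_cases hi0 : i.val = 0 <;> by_cases hj0 : j.val = 0
  · have hij : i = j := Fin.ext (by omega)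
    rw [hD0 i hi0, hD0 j hj0, hUL0 i hi0, hUL0 j hj0, hR0 i hi0, hR0 j hj0,
      if_pos (⟨hij, by omega⟩ : i = j ∧ i.val ≤ 1), hF]
    linear_combination (((n : ℝ) - 1) * F2) * hsN
  · have hij : ¬(i = j) := fun h => hj0 (by rw [← h]; exact hi0)
    rw [if_neg (fun h : i = j ∧ i.val ≤ 1 => hij h.1)]
    rw [hD0 i hi0, hUL0 i hi0, hR0 i hi0, hR1 j hj0]
    by_cases hj1 : j.val = 1
    · rw [hUL1 j hj1, hD1 j hj1, hF]; ring
    · rw [hUL2 j hj0 hj1]; ring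
  · have hij : ¬(i = j) := fun h => hi0 (by rw [h]; exact hj0)
    rw [if_neg (fun h : i = j ∧ i.val ≤ 1 => hij h.1)]
    rw [hD0 j hj0, hUL0 j hj0, hR0 j hj0, hR1 i hi0]
    by_cases hi1 : i.val = 1
    · rw [hUL1 i hi1, hD1 i hi1, hF]; ring
    · rw [hUL2 i hi0 hi1]; ring
  · rw [hR1 i hi0, hR1 j hj0]
    by_cases hi1 : i.val = 1 <;> by_cases hj1 : j.val = 1
    · have hij : i = j := Fin.ext (by omega)
      rw [hD1 i hi1, hD1 j hj1, hUL1 i hi1, hUL1 j hj1,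
        if_pos (⟨hij, by omega⟩ : i = j ∧ i.val ≤ 1), hF]
      linear_combination (((n : ℝ) - 1) * F2) * hsM
    · have hij : ¬(i = j) := fun h => hj1 (by rw [← h]; exact hi1)
      rw [hUL2 j hj0 hj1, if_neg (fun h : i = j ∧ i.val ≤ 1 => hij h.1)]; ring
    · have hij : ¬(i = j) := fun h => hi1 (by rw [h]; exact hj1)
      rw [hUL2 i hi0 hi1, if_neg (fun h : i = j ∧ i.val ≤ 1 => hij h.1)]; ring
    · rw [hUL2 i hi0 hi1, hUL2 j hj0 hj1,
        if_neg (fun h : i = j ∧ i.val ≤ 1 => by omega)]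
      ring

/-- The sum of T P(σ) Tᵗ over all σ ∈ Sₙ fixing the last element n equals
(n−1)! times the matrix whose (1,1) and (2,2) entries are 1 and all others 0. -/
theorem stmt_12 (n : ℕ) (hn : 3 ≤ n) :
    ∑ σ ∈ Finset.univ.filter
        (fun σ : Equiv.Perm (Fin n) => σ ⟨n - 1, by omega⟩ = ⟨n - 1, by omega⟩),
      Tmat n * Pmat n σ * (Tmat n)ᵀ =
    ((n - 1).factorial : ℝ) •
      Matrix.of (fun i j : Fin n => if i = j ∧ i.val ≤ 1 then (1 : ℝ) else 0) := by
  rw [← Finset.sum_mul, ← Finset.mul_sum, sumP n hn]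
  exact TST n hn
end
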